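/- As n → ∞, the (2n+1)-th root of V(SU(n+1))/V(SU(n)) is asymptotic to (2πe/n)^{1/2}; i.e., the limit of (V(SU(n+1))/V(SU(n)))^{1/(2n+1)} · (n/(2πe))^{1/2} equals 1. -/

import Mathlib

open Real Finset Filter

private noncomputable def cSt (n : ℕ) : ℝ :=
  (Nat.factorial n : ℝ) / (Real.sqrt (2 * π * n) * ((n : ℝ) / Real.exp 1) ^ n)

private lemma cSt_tendsto : Tendsto cSt atTop (nhds 1) := by
  have hπ : (0:ℝ) < π := pi_pos
  have hs : Real.sqrt π ≠ 0 := by positivity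
  have h : Tendsto (fun n => Stirling.stirlingSeq n / Real.sqrt π) atTop
      (nhds (Real.sqrt π / Real.sqrt π)) :=
    Stirling.tendsto_stirlingSeq_sqrt_pi.div_const _
  rw [div_self hs] at h
  refine h.congr fun n => ?_
  unfold cSt Stirling.stirlingSeq
  rw [div_div]
  congr 1
  rw [show (2 * π * (n:ℝ)) = π * (2 * n) by ring, Real.sqrt_mul hπ.le]
  ring

theorem volume_SU_ratio_asymptotic (V : ℕ → ℝ)
    (hV : ∀ n, 1 ≤ n → V n = Real.sqrt n * (2 * π) ^ (n * (n + 1) / 2 - 1)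
        / ∏ i ∈ Icc 1 (n - 1), (Nat.factorial i : ℝ)) :
    Tendsto (fun n : ℕ =>
        (V (n + 1) / V n) ^ ((1 : ℝ) / (2 * n + 1))
          * ((n : ℝ) / (2 * π * Real.exp 1)) ^ ((1 : ℝ) / 2))
      atTop (nhds 1) := by
  have hπ : (0:ℝ) < π := pi_pos
  have h2π : (0:ℝ) < 2 * π := by positivity
  -- ratio formula
  have hratio : ∀ n : ℕ, 1 ≤ n →
      V (n+1) / V n = Real.sqrt ((n:ℝ)+1) / Real.sqrt n * (2*π)^(n+1) / (Nat.factorial n : ℝ) := by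
    intro n hn
    have hn0 : (0:ℝ) < n := by exact_mod_cast hn
    rw [hV (n+1) (by omega), hV n hn]
    have e1 : (n+1) * ((n+1) + 1) / 2 - 1 = (n * (n + 1) / 2 - 1) + (n+1) := by
      have ha : (n+1) * ((n+1) + 1) = n * (n + 1) + 2 * (n+1) := by ring
      have hd : n * (n + 1) / 2 * 2 = n * (n + 1) :=
        Nat.div_mul_cancel (Nat.even_mul_succ_self n).two_dvd
      have hge : 1 * 2 ≤ n * (n + 1) := Nat.mul_le_mul hn (by omega)
      omega
    have e2 : (n+1) - 1 = n := by omega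
    have e3 : ∏ i ∈ Icc 1 n, (Nat.factorial i : ℝ)
        = (∏ i ∈ Icc 1 (n-1), (Nat.factorial i : ℝ)) * (Nat.factorial n : ℝ) := by
      have h := Finset.prod_Icc_succ_top (a := 1) (b := n-1)
        (f := fun i => (Nat.factorial i : ℝ)) (by omega)
      simpa [show n - 1 + 1 = n from by omega] using h
    rw [e1, e2, pow_add, e3]
    have hfac : (Nat.factorial n : ℝ) ≠ 0 := by positivity
    have hprod : (∏ i ∈ Icc 1 (n-1), (Nat.factorial i : ℝ)) ≠ 0 := by positivity
    have hsn : Real.sqrt n ≠ 0 := by positivity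
    have hP : ((2*π)^(n * (n + 1) / 2 - 1) : ℝ) ≠ 0 := by positivity
    push_cast
    field_simp
  -- key pointwise formula
  have key : ∀ᶠ n : ℕ in atTop,
      (V (n + 1) / V n) ^ ((1 : ℝ) / (2 * n + 1))
          * ((n : ℝ) / (2 * π * Real.exp 1)) ^ ((1 : ℝ) / 2)
      = Real.exp ((Real.log (Real.sqrt (((n:ℝ)+1)/n)) - Real.log (cSt n) - 1/2)
          * (1 / (2*(n:ℝ)+1))) := by
    filter_upwards [eventually_ge_atTop 1] with n hn
    have hn0 : (0:ℝ) < n := by exact_mod_cast hn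
    have hn1 : (0:ℝ) < (n:ℝ) + 1 := by positivity
    have hfac : (0:ℝ) < (Nat.factorial n : ℝ) := by positivity
    have hden : (0:ℝ) < Real.sqrt (2 * π * n) * ((n : ℝ) / Real.exp 1) ^ n := by
      apply mul_pos (Real.sqrt_pos.2 (by positivity))
      exact pow_pos (div_pos hn0 (Real.exp_pos 1)) n
    have hcpos : 0 < cSt n := div_pos hfac hden
    have hr : 0 < V (n+1) / V n := by
      rw [hratio n hn]
      have := Real.sqrt_pos.2 hn0
      have := Real.sqrt_pos.2 hn1
      positivity
    have hb : 0 < (n : ℝ) / (2 * π * Real.exp 1) := by positivity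
    have hf : 0 < (V (n + 1) / V n) ^ ((1 : ℝ) / (2 * ↑n + 1))
        * ((n : ℝ) / (2 * π * Real.exp 1)) ^ ((1 : ℝ) / 2) :=
      mul_pos (Real.rpow_pos_of_pos hr _) (Real.rpow_pos_of_pos hb _)
    rw [← Real.exp_log hf]
    congr 1
    rw [Real.log_mul (ne_of_gt (Real.rpow_pos_of_pos hr _)) (ne_of_gt (Real.rpow_pos_of_pos hb _)),
      Real.log_rpow hr, Real.log_rpow hb]
    -- expand log n!
    have lfac : Real.log (Nat.factorial n : ℝ)
        = Real.log (cSt n) + (Real.log (2*π) + Real.log n)/2 + n * (Real.log n - 1) := by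
      have hfeq : (Nat.factorial n : ℝ) = cSt n * (Real.sqrt (2 * π * n) * ((n : ℝ) / Real.exp 1) ^ n) := by
        unfold cSt; field_simp
      rw [hfeq, Real.log_mul (ne_of_gt hcpos) (ne_of_gt hden),
        Real.log_mul (ne_of_gt (Real.sqrt_pos.2 (by positivity))) (by positivity),
        Real.log_sqrt (by positivity), Real.log_pow, Real.log_div (ne_of_gt hn0) (Real.exp_ne_zero 1),
        Real.log_exp, Real.log_mul (ne_of_gt h2π) (ne_of_gt hn0)]
      ring
    have lr : Real.log (V (n+1) / V n)
        = Real.log ((n:ℝ)+1) / 2 - Real.log n / 2 + (n+1) * Real.log (2*π)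
          - Real.log (Nat.factorial n : ℝ) := by
      rw [hratio n hn,
        Real.log_div (by positivity) (ne_of_gt hfac),
        Real.log_mul (by positivity) (by positivity),
        Real.log_div (ne_of_gt (Real.sqrt_pos.2 hn1)) (ne_of_gt (Real.sqrt_pos.2 hn0)),
        Real.log_pow, Real.log_sqrt hn1.le, Real.log_sqrt hn0.le]
      push_cast
      ring
    have lb : Real.log ((n : ℝ) / (2 * π * Real.exp 1))
        = Real.log n - (Real.log (2*π) + 1) := by
      rw [Real.log_div (ne_of_gt hn0) (by positivity),
        Real.log_mul (ne_of_gt h2π) (Real.exp_ne_zero 1), Real.log_exp]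
    have ls : Real.log (Real.sqrt (((n:ℝ)+1)/n))
        = (Real.log ((n:ℝ)+1) - Real.log n) / 2 := by
      rw [Real.log_sqrt (by positivity), Real.log_div (ne_of_gt hn1) (ne_of_gt hn0)]
    rw [lr, lfac, lb, ls]
    have hN : (2*(n:ℝ)+1) ≠ 0 := by positivity
    field_simp
    ring
  -- limit of the exponent
  have hlim : Tendsto (fun n : ℕ =>
      (Real.log (Real.sqrt (((n:ℝ)+1)/n)) - Real.log (cSt n) - 1/2) * (1 / (2*(n:ℝ)+1)))
      atTop (nhds 0) := by
    have h1 : Tendsto (fun n : ℕ => ((n:ℝ)+1)/n) atTop (nhds 1) := by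
      have h0 : Tendsto (fun n : ℕ => 1 + 1/(n:ℝ)) atTop (nhds (1 + 0)) :=
        tendsto_const_nhds.add tendsto_one_div_atTop_nhds_zero_nat
      rw [add_zero] at h0
      refine h0.congr' ?_
      filter_upwards [eventually_ge_atTop 1] with n hn
      have hn0 : (0:ℝ) < n := by exact_mod_cast hn
      field_simp
    have hsq : Tendsto (fun n : ℕ => Real.sqrt (((n:ℝ)+1)/n)) atTop (nhds 1) := by
      have := (Real.continuous_sqrt.tendsto 1).comp h1
      simpa only [Function.comp_def, Real.sqrt_one] using this
    have hlog1 : Tendsto (fun n : ℕ => Real.log (Real.sqrt (((n:ℝ)+1)/n))) atTop (nhds 0) := by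
      have := ((Real.continuousAt_log one_ne_zero).tendsto).comp hsq
      simpa only [Function.comp_def, Real.log_one] using this
    have hlog2 : Tendsto (fun n : ℕ => Real.log (cSt n)) atTop (nhds 0) := by
      have := ((Real.continuousAt_log one_ne_zero).tendsto).comp cSt_tendsto
      simpa only [Function.comp_def, Real.log_one] using this
    have hinv : Tendsto (fun n : ℕ => 1 / (2*(n:ℝ)+1)) atTop (nhds 0) := by
      have h2n : Tendsto (fun n : ℕ => 2*(n:ℝ)+1) atTop atTop :=
        tendsto_atTop_add_const_right _ 1
          ((tendsto_natCast_atTop_atTop (R := ℝ)).const_mul_atTop (by norm_num))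
      exact (tendsto_inv_atTop_zero.comp h2n).congr fun n => (one_div _).symm
    have hnum : Tendsto (fun n : ℕ =>
        Real.log (Real.sqrt (((n:ℝ)+1)/n)) - Real.log (cSt n) - 1/2) atTop (nhds (0 - 0 - 1/2)) :=
      (hlog1.sub hlog2).sub tendsto_const_nhds
    have := hnum.mul hinv
    simpa using this
  have hfin : Tendsto (fun n : ℕ => Real.exp
      ((Real.log (Real.sqrt (((n:ℝ)+1)/n)) - Real.log (cSt n) - 1/2) * (1 / (2*(n:ℝ)+1))))
      atTop (nhds 1) := by
    have := (Real.continuous_exp.tendsto 0).comp hlim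
    simpa only [Function.comp_def, Real.exp_zero] using this
  exact Tendsto.congr' (Filter.EventuallyEq.symm key) hfin
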